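/- The inverse Gaussian density f(x; a, b) = (2π)^{-1/2} a x^{-3/2} exp(ab - (1/2)(a² x^{-1} + b² x)) for x > 0 integrates to 1, i.e., it is a probability density on (0, ∞), for any a > 0 and b > 0. -/

import Mathlib

open MeasureTheory Real Set

/-- The inverse Gaussian density IG(a, b). -/
noncomputable def igPdf (a b x : ℝ) : ℝ :=
  (2 * π) ^ (-(1:ℝ)/2) * a * x ^ (-(3:ℝ)/2) *
    Real.exp (a * b - (1/2) * (a^2 * x⁻¹ + b^2 * x))

noncomputable def igE (a b x : ℝ) : ℝ := Real.exp (-(a^2 * x⁻¹ + b^2 * x)/2)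
noncomputable def igF (a b x : ℝ) : ℝ := a * (x * Real.sqrt x)⁻¹ * igE a b x
noncomputable def igG (a b x : ℝ) : ℝ := b * (Real.sqrt x)⁻¹ * igE a b x
noncomputable def igPsi (a b x : ℝ) : ℝ := b * Real.sqrt x - a * (Real.sqrt x)⁻¹
noncomputable def igD (a b x : ℝ) : ℝ := (b * (Real.sqrt x)⁻¹ + a * (x * Real.sqrt x)⁻¹) / 2
noncomputable def igPhi (a b x : ℝ) : ℝ := a^2/b^2 * x⁻¹

variable {a b : ℝ}

lemma igPhi_image (ha : 0 < a) (hb : 0 < b) : igPhi a b '' Ioi 0 = Ioi 0 := by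
  ext x
  constructor
  · rintro ⟨y, hy, rfl⟩
    have : (0:ℝ) < y := hy
    have : 0 < igPhi a b y := by unfold igPhi; positivity
    exact this
  · intro hx
    have hx0 : (0:ℝ) < x := hx
    refine ⟨a^2/b^2 * x⁻¹, mem_Ioi.2 (by positivity), ?_⟩
    unfold igPhi
    field_simp

lemma igPhi_inj (ha : 0 < a) (hb : 0 < b) : InjOn (igPhi a b) (Ioi 0) := by
  intro x hx y hy h
  have hx0 : (0:ℝ) < x := hx
  have hy0 : (0:ℝ) < y := hy
  unfold igPhi at h
  have hc : a^2/b^2 ≠ 0 := by positivity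
  have := mul_left_cancel₀ hc h
  exact inv_injective this

lemma igPhi_deriv (ha : 0 < a) (hb : 0 < b) :
    ∀ x ∈ Ioi (0:ℝ), HasDerivWithinAt (igPhi a b) (a^2/b^2 * (-(x^2)⁻¹)) (Ioi 0) x := by
  intro x hx
  have hx0 : (0:ℝ) < x := hx
  exact ((hasDerivAt_inv hx0.ne').const_mul (a^2/b^2)).hasDerivWithinAt

lemma stepA (ha : 0 < a) (hb : 0 < b) {y : ℝ} (hy : 0 < y) :
    |a^2/b^2 * (-(y^2)⁻¹)| * igF a b (igPhi a b y) = igG a b y := by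
  have hs : 0 < Real.sqrt y := Real.sqrt_pos.2 hy
  have hss : Real.sqrt y * Real.sqrt y = y := Real.mul_self_sqrt hy.le
  have habs : |a^2/b^2 * (-(y^2)⁻¹)| = a^2/b^2 * (y^2)⁻¹ := by
    rw [show a^2/b^2 * (-(y^2)⁻¹) = -(a^2/b^2 * (y^2)⁻¹) by ring, abs_neg,
      abs_of_nonneg (by positivity)]
  have hsq : Real.sqrt (igPhi a b y) = a/b * (Real.sqrt y)⁻¹ := by
    have h1 : igPhi a b y = (a/(b*Real.sqrt y))^2 := by
      unfold igPhi
      rw [div_pow, mul_pow, Real.sq_sqrt hy.le]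
      ring
    rw [h1, Real.sqrt_sq (by positivity)]
    field_simp
  have hEeq : igE a b (igPhi a b y) = igE a b y := by
    have harg : a^2 * (igPhi a b y)⁻¹ + b^2 * (igPhi a b y) = a^2 * y⁻¹ + b^2 * y := by
      unfold igPhi
      field_simp
      ring
    unfold igE
    rw [harg]
  rw [habs]
  unfold igF igG
  rw [hsq, hEeq]
  unfold igPhi
  field_simp
  ring_nf
  rw [Real.sq_sqrt hy.le]
  ring

lemma igPsi_deriv (ha : 0 < a) (hb : 0 < b) :
    ∀ x ∈ Ioi (0:ℝ), HasDerivWithinAt (igPsi a b) (igD a b x) (Ioi 0) x := by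
  intro x hx
  have hx0 : (0:ℝ) < x := hx
  have hs : 0 < Real.sqrt x := Real.sqrt_pos.2 hx0
  have h1 : HasDerivAt Real.sqrt (1/(2*Real.sqrt x)) x := Real.hasDerivAt_sqrt hx0.ne'
  have h2 : HasDerivAt (fun y => b * Real.sqrt y) (b * (1/(2*Real.sqrt x))) x := h1.const_mul b
  have h3 : HasDerivAt (fun y => (Real.sqrt y)⁻¹) (-(1/(2*Real.sqrt x)) / (Real.sqrt x)^2) x :=
    h1.inv hs.ne'
  have h4 : HasDerivAt (igPsi a b)
      (b * (1/(2*Real.sqrt x)) - a * (-(1/(2*Real.sqrt x)) / (Real.sqrt x)^2)) x :=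
    h2.sub (h3.const_mul a)
  have heq : b * (1/(2*Real.sqrt x)) - a * (-(1/(2*Real.sqrt x)) / (Real.sqrt x)^2)
      = igD a b x := by
    unfold igD
    have hss : Real.sqrt x * Real.sqrt x = x := Real.mul_self_sqrt hx0.le
    rw [sq]
    field_simp
    ring_nf
    rw [Real.sq_sqrt hx0.le]
    ring
  rw [heq] at h4
  exact h4.hasDerivWithinAt

lemma igPsi_mono (ha : 0 < a) (hb : 0 < b) : StrictMonoOn (igPsi a b) (Ioi 0) := by
  intro x hx y hy hxy
  have hx0 : (0:ℝ) < x := hx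
  have hy0 : (0:ℝ) < y := hy
  have h1 : Real.sqrt x < Real.sqrt y := Real.sqrt_lt_sqrt hx0.le hxy
  have hsx : 0 < Real.sqrt x := Real.sqrt_pos.2 hx0
  have hsy : 0 < Real.sqrt y := Real.sqrt_pos.2 hy0
  have h2 : (Real.sqrt y)⁻¹ < (Real.sqrt x)⁻¹ := by
    exact inv_strictAnti₀ hsx h1
  unfold igPsi
  nlinarith

lemma igPsi_image (ha : 0 < a) (hb : 0 < b) : igPsi a b '' Ioi 0 = univ := by
  apply eq_univ_of_forall
  intro u
  set s := Real.sqrt (u^2 + 4*a*b) with hsdef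
  have hs2 : s^2 = u^2 + 4*a*b := Real.sq_sqrt (by positivity)
  have hsnn : 0 ≤ s := Real.sqrt_nonneg _
  have hus : 0 < u + s := by nlinarith [mul_pos ha hb]
  set t := (u + s)/(2*b) with htdef
  have ht : 0 < t := div_pos hus (by positivity)
  refine ⟨t^2, mem_Ioi.2 (by positivity), ?_⟩
  have hst : Real.sqrt (t^2) = t := Real.sqrt_sq ht.le
  unfold igPsi
  rw [hst]
  have key : b * t * t = u * t + a := by
    rw [htdef]
    field_simp
    nlinarith [hs2]
  field_simp
  nlinarith [key]

lemma stepB (ha : 0 < a) (hb : 0 < b) {x : ℝ} (hx : 0 < x) :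
    |igD a b x| * Real.exp (-(igPsi a b x)^2/2)
      = Real.exp (a*b) * ((igF a b x + igG a b x)/2) := by
  have hs : 0 < Real.sqrt x := Real.sqrt_pos.2 hx
  have hss : Real.sqrt x * Real.sqrt x = x := Real.mul_self_sqrt hx.le
  have habs : |igD a b x| = igD a b x := by
    apply abs_of_nonneg
    unfold igD
    positivity
  have hpsi2 : (igPsi a b x)^2 = b^2 * x - 2*(a*b) + a^2 * x⁻¹ := by
    unfold igPsi
    have hxne : x ≠ 0 := hx.ne'
    field_simp
    have h2 : b * Real.sqrt x * Real.sqrt x = b * x := by rw [mul_assoc, hss]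
    rw [Real.sq_sqrt hx.le]
    ring
  have hexp : Real.exp (-(igPsi a b x)^2/2) = Real.exp (a*b) * igE a b x := by
    rw [hpsi2]
    unfold igE
    rw [← Real.exp_add]
    congr 1
    ring
  rw [habs, hexp]
  unfold igD igF igG
  ring

lemma igGauss : Integrable (fun u : ℝ => Real.exp (-u^2/2)) := by
  have h := integrable_exp_neg_mul_sq (b := (1/2:ℝ)) (by norm_num)
  have he : (fun u:ℝ => Real.exp (-u^2/2)) = fun u => Real.exp (-(1/2:ℝ) * u^2) := by
    funext u; ring_nf
  rw [he]; exact h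

lemma igE_meas : Measurable (igE a b) := by
  unfold igE
  fun_prop

lemma igF_meas : Measurable (igF a b) := by
  unfold igF
  exact (((measurable_id.mul Real.continuous_sqrt.measurable).inv).const_mul a).mul
    (igE_meas (a := a) (b := b))

lemma igG_meas : Measurable (igG a b) := by
  unfold igG
  exact ((Real.continuous_sqrt.measurable.inv).const_mul b).mul (igE_meas (a := a) (b := b))

set_option maxHeartbeats 800000 in
lemma hintD (ha : 0 < a) (hb : 0 < b) :
    IntegrableOn (fun x => Real.exp (a*b) * ((igF a b x + igG a b x)/2)) (Ioi 0) := by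
  have h0 : IntegrableOn (fun u : ℝ => Real.exp (-u^2/2)) (igPsi a b '' Ioi 0) := by
    rw [igPsi_image ha hb]; exact igGauss.integrableOn
  have h1 : IntegrableOn (fun x => |igD a b x| • Real.exp (-(igPsi a b x)^2/2)) (Ioi 0) :=
    (integrableOn_image_iff_integrableOn_abs_deriv_smul measurableSet_Ioi (igPsi_deriv ha hb)
      ((igPsi_mono ha hb).injOn) (fun u => Real.exp (-u^2/2))).1 h0
  refine h1.congr_fun (fun x hx => ?_) measurableSet_Ioi
  simp only [smul_eq_mul]
  exact stepB ha hb hx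

lemma hintF (ha : 0 < a) (hb : 0 < b) : IntegrableOn (igF a b) (Ioi 0) := by
  refine Integrable.mono' ((hintD ha hb).const_mul 2) (igF_meas.aestronglyMeasurable) ?_
  rw [ae_restrict_iff' measurableSet_Ioi]
  filter_upwards with x hx
  have hx0 : (0:ℝ) < x := hx
  have hs : 0 < Real.sqrt x := Real.sqrt_pos.2 hx0
  have hE : 0 < igE a b x := Real.exp_pos _
  have hFpos : 0 ≤ igF a b x := by unfold igF; positivity
  have hGpos : 0 ≤ igG a b x := by unfold igG; positivity
  have h1 : (1:ℝ) ≤ Real.exp (a*b) := Real.one_le_exp (by positivity)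
  rw [Real.norm_eq_abs, abs_of_nonneg hFpos]
  have h2 : 1 * (igF a b x + igG a b x) ≤ Real.exp (a*b) * (igF a b x + igG a b x) :=
    mul_le_mul_of_nonneg_right h1 (by linarith)
  linarith

lemma hintG (ha : 0 < a) (hb : 0 < b) : IntegrableOn (igG a b) (Ioi 0) := by
  refine Integrable.mono' ((hintD ha hb).const_mul 2) (igG_meas.aestronglyMeasurable) ?_
  rw [ae_restrict_iff' measurableSet_Ioi]
  filter_upwards with x hx
  have hx0 : (0:ℝ) < x := hx
  have hs : 0 < Real.sqrt x := Real.sqrt_pos.2 hx0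
  have hE : 0 < igE a b x := Real.exp_pos _
  have hFpos : 0 ≤ igF a b x := by unfold igF; positivity
  have hGpos : 0 ≤ igG a b x := by unfold igG; positivity
  have h1 : (1:ℝ) ≤ Real.exp (a*b) := Real.one_le_exp (by positivity)
  rw [Real.norm_eq_abs, abs_of_nonneg hGpos]
  have h2 : 1 * (igF a b x + igG a b x) ≤ Real.exp (a*b) * (igF a b x + igG a b x) :=
    mul_le_mul_of_nonneg_right h1 (by linarith)
  linarith

lemma igKey (ha : 0 < a) (hb : 0 < b) :
    Real.exp (a*b) * (∫ x in Ioi (0:ℝ), igF a b x) = Real.sqrt (2*π) := by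
  have hA : (∫ x in Ioi (0:ℝ), igF a b x) = ∫ x in Ioi (0:ℝ), igG a b x := by
    conv_lhs => rw [← igPhi_image ha hb]
    rw [integral_image_eq_integral_abs_deriv_smul measurableSet_Ioi (igPhi_deriv ha hb)
      (igPhi_inj ha hb)]
    refine setIntegral_congr_fun measurableSet_Ioi fun y hy => ?_
    simp only [smul_eq_mul]
    exact stepA ha hb hy
  have h0 : (∫ u : ℝ, Real.exp (-u^2/2)) = Real.sqrt (2*π) := by
    have h := integral_gaussian (1/2 : ℝ)
    rw [show π/(1/2:ℝ) = 2*π by ring] at h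
    rw [show (fun u:ℝ => Real.exp (-u^2/2)) = fun u => Real.exp (-(1/2:ℝ) * u^2) by
      funext u; ring_nf]
    exact h
  have h2 : (∫ u : ℝ, Real.exp (-u^2/2))
      = ∫ x in Ioi (0:ℝ), Real.exp (a*b) * ((igF a b x + igG a b x)/2) := by
    rw [← setIntegral_univ, ← igPsi_image ha hb,
      integral_image_eq_integral_abs_deriv_smul measurableSet_Ioi (igPsi_deriv ha hb)
        ((igPsi_mono ha hb).injOn)]
    refine setIntegral_congr_fun measurableSet_Ioi fun x hx => ?_
    simp only [smul_eq_mul]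
    exact stepB ha hb hx
  have h3 : (∫ x in Ioi (0:ℝ), Real.exp (a*b) * ((igF a b x + igG a b x)/2))
      = Real.exp (a*b) * (((∫ x in Ioi (0:ℝ), igF a b x) + ∫ x in Ioi (0:ℝ), igG a b x)/2) := by
    rw [integral_const_mul]
    congr 1
    rw [integral_div, integral_add (hintF ha hb) (hintG ha hb)]
  rw [h2, h3, ← hA] at h0
  rw [← h0]
  ring

theorem igPdf_integral_eq_one (a b : ℝ) (ha : 0 < a) (hb : 0 < b) :
    ∫ x in Ioi (0:ℝ), igPdf a b x = 1 := by
  have hpt : ∀ x ∈ Ioi (0:ℝ), igPdf a b x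
      = ((2*π)^(-(1:ℝ)/2) * Real.exp (a*b)) * igF a b x := by
    intro x hx
    have hx0 : (0:ℝ) < x := hx
    unfold igPdf igF igE
    have h1 : x ^ (-(3:ℝ)/2) = (x * Real.sqrt x)⁻¹ := by
      rw [show (-(3:ℝ)/2) = -(3/2) by norm_num, Real.rpow_neg hx0.le]
      congr 1
      rw [show ((3:ℝ)/2) = 1 + 1/2 by norm_num, Real.rpow_add hx0, Real.rpow_one,
        ← Real.sqrt_eq_rpow]
    rw [h1, show a*b - (1/2)*(a^2*x⁻¹ + b^2*x) = a*b + (-(a^2*x⁻¹+b^2*x)/2) by ring,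
      Real.exp_add]
    ring
  rw [setIntegral_congr_fun measurableSet_Ioi hpt, integral_const_mul,
    show ((2*π:ℝ))^(-(1:ℝ)/2) = (Real.sqrt (2*π))⁻¹ by
      rw [show (-(1:ℝ)/2) = -(1/2) by norm_num, Real.rpow_neg (by positivity),
        ← Real.sqrt_eq_rpow],
    mul_assoc, igKey ha hb, inv_mul_cancel₀ (Real.sqrt_ne_zero'.2 (by positivity))]
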